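/- Let D, K ≥ 1, let ι be a finite index type, let v : ι → ℝ^D, and let π : ι → Fin K be such that for each j ∈ Fin K the subfamily (v i)_{i : π i = j} is linearly independent over ℝ. Let L, g : ι → ℝ be positive, and let W : ℝ → ℝ. Define, for each j, W_j(F) = Σ_{i : π i = j} W(‖F(v i)‖ / L i). Then there exist invertible linear maps G_1, …, G_K of ℝ^D such that for every linear map F : ℝ^D → ℝ^D: Σ_{i ∈ ι} W(‖F(v i)‖ / L i) = Σ_{j=1}^K W_j(F) and Σ_{i ∈ ι} W(‖F(v i)‖ / (L i · g i)) = Σ_{j=1}^K W_j(F ∘ G_j⁻¹). (Energy-deformation decomposition for a homogeneously recombined lattice of order K.) -/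

import Mathlib

open scoped BigOperators

/-- Energy-deformation decomposition for a homogeneously recombined lattice of order `K`:
if the connectivity vectors `v i` are partitioned (by `π`) into `K` linearly independent
families, then there are invertible linear growth tensors `G 1, …, G K` realising the
decomposition of the initial and grown Cauchy–Born continuum energy densities. -/
theorem energy_deformation_decomposition_orderK
    (D K : ℕ) (hD : 1 ≤ D) (hK : 1 ≤ K) (ι : Type) [Fintype ι]
    (v : ι → EuclideanSpace ℝ (Fin D)) (π : ι → Fin K)
    (hind : ∀ j : Fin K, LinearIndependent ℝ (fun i : {i // π i = j} => v i.1))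
    (L g : ι → ℝ) (hL : ∀ i, 0 < L i) (hg : ∀ i, 0 < g i) (W : ℝ → ℝ) :
    ∃ G : Fin K → (EuclideanSpace ℝ (Fin D) ≃ₗ[ℝ] EuclideanSpace ℝ (Fin D)),
      ∀ F : EuclideanSpace ℝ (Fin D) →ₗ[ℝ] EuclideanSpace ℝ (Fin D),
        ((∑ i : ι, W (‖F (v i)‖ / L i)) =
          ∑ j : Fin K, ∑ i : {i // π i = j}, W (‖F (v i.1)‖ / L i.1)) ∧
        ((∑ i : ι, W (‖F (v i)‖ / (L i * g i))) =
          ∑ j : Fin K, ∑ i : {i // π i = j},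
            W (‖(F ∘ₗ (G j).symm.toLinearMap) (v i.1)‖ / L i.1)) := by
  classical
  have main : ∀ j : Fin K, ∃ G : EuclideanSpace ℝ (Fin D) ≃ₗ[ℝ] EuclideanSpace ℝ (Fin D), ∀ i, π i = j → G (v i) = g i • v i := by
    intro j
    have hli : LinearIndepOn ℝ id (Set.range (fun i : {i // π i = j} => v i.1)) :=
      (linearIndepOn_id_range_iff (hind j).injective).mpr (hind j)
    set s := Set.range (fun i : {i // π i = j} => v i.1) with hsdef
    have hsub : s ⊆ hli.extend (Set.subset_univ s) := hli.subset_extend _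
    let b := Module.Basis.extend hli
    let c : EuclideanSpace ℝ (Fin D) → ℝ := fun x => if h : x ∈ s then g h.choose.1 else 1
    have hc : ∀ x, c x ≠ 0 := by
      intro x
      by_cases h : x ∈ s
      · simp only [c, dif_pos h]; exact (hg _).ne'
      · simp [c, dif_neg h]
    let f1 : EuclideanSpace ℝ (Fin D) →ₗ[ℝ] EuclideanSpace ℝ (Fin D) := b.constr ℝ (fun x => c x • (x : EuclideanSpace ℝ (Fin D)))
    let f2 : EuclideanSpace ℝ (Fin D) →ₗ[ℝ] EuclideanSpace ℝ (Fin D) := b.constr ℝ (fun x => (c x)⁻¹ • (x : EuclideanSpace ℝ (Fin D)))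
    have hf1 : ∀ x : hli.extend (Set.subset_univ s),
        f1 x = c x • (x : EuclideanSpace ℝ (Fin D)) := by
      intro x
      have h := b.constr_basis ℝ
        (fun x => c x • (x : EuclideanSpace ℝ (Fin D))) x
      rwa [Module.Basis.extend_apply_self] at h
    have hf2 : ∀ x : hli.extend (Set.subset_univ s),
        f2 x = (c x)⁻¹ • (x : EuclideanSpace ℝ (Fin D)) := by
      intro x
      have h := b.constr_basis ℝ
        (fun x => (c x)⁻¹ • (x : EuclideanSpace ℝ (Fin D))) x
      rwa [Module.Basis.extend_apply_self] at h
    have h12 : f1 ∘ₗ f2 = LinearMap.id := by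
      apply b.ext
      intro x
      have hx : b x = (x : EuclideanSpace ℝ (Fin D)) := Module.Basis.extend_apply_self hli x
      simp only [LinearMap.comp_apply, LinearMap.id_apply, hx]
      rw [hf2 x, map_smul, hf1 x, smul_smul, inv_mul_cancel₀ (hc x), one_smul]
    have h21 : f2 ∘ₗ f1 = LinearMap.id := by
      apply b.ext
      intro x
      have hx : b x = (x : EuclideanSpace ℝ (Fin D)) := Module.Basis.extend_apply_self hli x
      simp only [LinearMap.comp_apply, LinearMap.id_apply, hx]
      rw [hf1 x, map_smul, hf2 x, smul_smul, mul_inv_cancel₀ (hc x), one_smul]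
    refine ⟨LinearEquiv.ofLinear f1 f2 h12 h21, ?_⟩
    intro i hπ
    have hmem : v i ∈ s := ⟨⟨i, hπ⟩, rfl⟩
    have hcv : c (v i) = g i := by
      simp only [c, dif_pos hmem]
      have hspec : v (hmem.choose.1) = v i := hmem.choose_spec
      have : hmem.choose = ⟨i, hπ⟩ := (hind j).injective hspec
      rw [this]
    rw [LinearEquiv.ofLinear_apply]
    have hv : f1 (v i)
        = f1 ((⟨v i, hsub hmem⟩ : hli.extend (Set.subset_univ s)) :
            EuclideanSpace ℝ (Fin D)) := rfl
    rw [hv, hf1, hcv]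
  choose G hG using main
  refine ⟨G, fun F => ⟨?_, ?_⟩⟩
  · exact (Fintype.sum_fiberwise π fun i => W (‖F (v i)‖ / L i)).symm
  · rw [← Fintype.sum_fiberwise π fun i => W (‖F (v i)‖ / (L i * g i))]
    refine Finset.sum_congr rfl fun j _ => Finset.sum_congr rfl fun i _ => ?_
    have hGi : (G j).symm (v i.1) = (g i.1)⁻¹ • v i.1 := by
      rw [LinearEquiv.symm_apply_eq, map_smul, hG j i.1 i.2, smul_smul,
        inv_mul_cancel₀ (hg i.1).ne', one_smul]
    have : ‖(F ∘ₗ (G j).symm.toLinearMap) (v i.1)‖ = ‖F (v i.1)‖ / g i.1 := by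
      simp only [LinearMap.comp_apply, LinearEquiv.coe_coe, hGi, map_smul, norm_smul,
        Real.norm_eq_abs, abs_inv, abs_of_pos (hg i.1)]
      ring
    rw [this, div_div, mul_comm (g i.1) (L i.1)]
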